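/- Every zero-dimensional commutative ring has property (A). -/

import Mathlib

/-- The Ohm-Rush content of `f ∈ S`: the intersection of all ideals `I` of `R`
with `f ∈ IS`. -/
def orContent (R : Type*) [CommRing R] {S : Type*} [CommRing S] [Algebra R S] (f : S) :
    Ideal R :=
  sInf {I : Ideal R | f ∈ I.map (algebraMap R S)}

/-- `S` is an Ohm-Rush `R`-algebra if each `f ∈ S` lies in `c(f)S`,
i.e. there is a minimal ideal `I` with `f ∈ IS`. -/
def IsOhmRush (R S : Type*) [CommRing R] [CommRing S] [Algebra R S] : Prop :=
  ∀ f : S, f ∈ (orContent R f).map (algebraMap R S)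

/-- `S` is a McCoy `R`-algebra if whenever `f * g = 0` with `g ≠ 0`,
some nonzero `r ∈ R` annihilates the content of `f`. -/
def IsMcCoy (R S : Type*) [CommRing R] [CommRing S] [Algebra R S] : Prop :=
  ∀ f g : S, f * g = 0 → g ≠ 0 → ∃ r : R, r ≠ 0 ∧ ∀ a ∈ orContent R f, r * a = 0

/-- `S` is a weak content `R`-algebra: Ohm-Rush and `rad c(fg) = rad (c(f)c(g))`. -/
def IsWeakContent (R S : Type*) [CommRing R] [CommRing S] [Algebra R S] : Prop :=
  IsOhmRush R S ∧ ∀ f g : S,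
    (orContent R (f * g)).radical = (orContent R f * orContent R g).radical

/-- Property (A): every finitely generated ideal consisting of zero-divisors
has a nonzero annihilator. -/
def HasPropertyA (R : Type*) [CommRing R] : Prop :=
  ∀ J : Ideal R, J.FG → (∀ a ∈ J, a ∉ nonZeroDivisors R) →
    ∃ r : R, r ≠ 0 ∧ ∀ a ∈ J, a * r = 0

/-- Fidel (A): every quotient has property (A). -/
def HasFidelA (R : Type*) [CommRing R] : Prop :=
  ∀ I : Ideal R, HasPropertyA (R ⧸ I)

/-- `S` is a semicontent `R`-algebra: faithfully flat, Ohm-Rush, and for every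
multiplicative set `W ⊆ R` meeting `c(f)`, `c(fg)` and `c(g)` agree after
localizing at `W`. -/
def IsSemicontent (R S : Type*) [CommRing R] [CommRing S] [Algebra R S] : Prop :=
  Module.FaithfullyFlat R S ∧ IsOhmRush R S ∧
    ∀ (W : Submonoid R) (f g : S), (∃ w ∈ W, w ∈ orContent R f) →
      (orContent R (f * g)).map (algebraMap R (Localization W)) =
        (orContent R g).map (algebraMap R (Localization W))


/-- In a zero-dimensional commutative ring, every element is strongly π-regular. -/
lemma pireg_aux {R : Type*} [CommRing R]
    (hdim : ∀ p : Ideal R, p.IsPrime → p.IsMaximal) (a : R) :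
    ∃ (n : ℕ) (c : R), 0 < n ∧ a ^ n = a ^ (n + 1) * c := by
  by_contra h
  push_neg at h
  set W : Submonoid R :=
    { carrier := {x | ∃ n : ℕ, ∃ c : R, x = a ^ n * (1 + a * c)}
      one_mem' := ⟨0, 0, by ring⟩
      mul_mem' := by
        rintro x y ⟨n, c, rfl⟩ ⟨m, d, rfl⟩
        exact ⟨n + m, c + d + a * c * d, by ring⟩ } with hW
  have h0 : (0 : R) ∉ W := by
    rintro ⟨n, c, hnc⟩
    rcases Nat.eq_zero_or_pos n with rfl | hn
    · -- 1 + a*c = 0, so a is a unit, contradicting h at n = 1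
      simp only [pow_zero, one_mul] at hnc
      refine h 1 (-c) one_pos ?_
      have h1 : a * c = -1 := by linear_combination -hnc
      linear_combination a * h1
    · refine h n (-c) hn ?_
      have : (0 : R) = a ^ n + a ^ (n + 1) * c := by rw [hnc]; ring
      linear_combination -this
  have hdisj : Disjoint ((⊥ : Ideal R) : Set R) (W : Set R) := by
    rw [Set.disjoint_left]
    intro x hx
    simp only [SetLike.mem_coe, Ideal.mem_bot] at hx
    subst hx; exact h0
  obtain ⟨p, hp, -, hpd⟩ := Ideal.exists_le_prime_disjoint (⊥ : Ideal R) W hdisj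
  have hmax := hdim p hp
  have haW : a ∈ W := ⟨1, 0, by ring⟩
  have ha : a ∉ p := fun hmem => Set.disjoint_left.mp hpd hmem haW
  obtain ⟨y, i, hi, hyi⟩ := hmax.exists_inv ha
  have : (1 : R) + a * (-y) ∈ W := ⟨0, -y, by ring⟩
  have : (1 : R) + a * (-y) ∈ p := by
    have : (1 : R) + a * (-y) = i := by linear_combination -hyi
    rw [this]; exact hi
  exact Set.disjoint_left.mp hpd this ⟨0, -y, by ring⟩

/-- From strong π-regularity, `a ^ n = (a ^ n) ^ 2 * d` for some `d`. -/
lemma pireg_idem {R : Type*} [CommRing R]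
    (hdim : ∀ p : Ideal R, p.IsPrime → p.IsMaximal) (a : R) :
    ∃ (n : ℕ) (d : R), 0 < n ∧ a ^ n = (a ^ n) ^ 2 * d := by
  obtain ⟨n, c, hn, hc⟩ := pireg_aux hdim a
  refine ⟨n, c ^ n, hn, ?_⟩
  have key : ∀ k : ℕ, a ^ n = a ^ n * (a * c) ^ k := by
    intro k
    induction k with
    | zero => simp
    | succ k ih =>
      calc a ^ n = a ^ (n + 1) * c := hc
        _ = (a ^ n) * (a * c) := by ring
        _ = (a ^ n * (a * c) ^ k) * (a * c) := by rw [← ih]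
        _ = a ^ n * (a * c) ^ (k + 1) := by ring
  calc a ^ n = a ^ n * (a * c) ^ n := key n
    _ = a ^ n * (a ^ n * c ^ n) := by rw [mul_pow]
    _ = (a ^ n) ^ 2 * c ^ n := by ring


/-- If each `E a` lies in `I`, then `1 - ∏ (1 - E a)` lies in `I`. -/
lemma one_sub_prod_mem {R : Type*} [CommRing R] (I : Ideal R) (t : Finset R) (E : R → R)
    (h : ∀ a ∈ t, E a ∈ I) : 1 - ∏ a ∈ t, (1 - E a) ∈ I := by
  classical
  induction t using Finset.induction_on with
  | empty => simp
  | @insert a t hins ih =>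
    rw [Finset.prod_insert hins]
    have key : 1 - (1 - E a) * ∏ b ∈ t, (1 - E b)
        = E a * ∏ b ∈ t, (1 - E b) + (1 - ∏ b ∈ t, (1 - E b)) := by ring
    rw [key]
    exact Ideal.add_mem _ (Ideal.mul_mem_right _ _ (h a (Finset.mem_insert_self a t)))
      (ih fun b hb => h b (Finset.mem_insert_of_mem hb))

/-- Every zero-dimensional commutative ring has property (A). -/
theorem stmt_13 (R : Type*) [CommRing R]
    (hdim : ∀ p : Ideal R, p.IsPrime → p.IsMaximal) :
    HasPropertyA R := by
  classical
  intro J hJfg hzd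
  obtain ⟨s, rfl⟩ := hJfg
  choose n d hn hd using fun a : R => pireg_idem hdim a
  set E : R → R := fun a => a ^ n a * d a with hE
  have hEidem : ∀ a : R, E a * E a = E a := by
    intro a
    simp only [hE]
    linear_combination (-(d a)) * hd a
  have hEB : ∀ a : R, E a * a ^ n a = a ^ n a := by
    intro a
    simp only [hE]
    linear_combination (-1 : R) * hd a
  have hEJ : ∀ a ∈ s, E a ∈ Ideal.span (s : Set R) := fun a ha =>
    Ideal.mul_mem_right _ _ (Ideal.pow_mem_of_mem _ (Ideal.subset_span ha) _ (hn a))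
  set e : R := 1 - ∏ a ∈ s, (1 - E a) with he
  have heJ : e ∈ Ideal.span (s : Set R) := one_sub_prod_mem _ s E hEJ
  -- e is a zero-divisor, get a nonzero x with x * e = 0
  have henzd := hzd e heJ
  rw [mem_nonZeroDivisors_iff_right] at henzd
  push_neg at henzd
  obtain ⟨x, hxe, hx0⟩ := henzd
  -- E a * e = E a for a ∈ s
  have hEe : ∀ a ∈ s, E a * e = E a := by
    intro a ha
    have hprod : E a * ∏ b ∈ s, (1 - E b) = 0 := by
      rw [← Finset.mul_prod_erase s _ ha, ← mul_assoc]
      have : E a * (1 - E a) = 0 := by linear_combination (-1 : R) * hEidem a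
      rw [this, zero_mul]
    rw [he]
    linear_combination -hprod
  -- a ^ n a * x = 0 for a ∈ s
  have hpow : ∀ a ∈ s, a ^ n a * x = 0 := by
    intro a ha
    have h1 : E a * x = 0 := by
      calc E a * x = (E a * e) * x := by rw [hEe a ha]
        _ = E a * (x * e) := by ring
        _ = 0 := by rw [hxe, mul_zero]
    calc a ^ n a * x = (E a * a ^ n a) * x := by rw [hEB a]
      _ = a ^ n a * (E a * x) := by ring
      _ = 0 := by rw [h1, mul_zero]
  -- the annihilator of x
  set A : Ideal R := Submodule.annihilator (Submodule.span R {x}) with hA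
  have hmemA : ∀ r : R, r ∈ A ↔ r * x = 0 := by
    intro r
    rw [hA, Submodule.mem_annihilator_span_singleton, smul_eq_mul]
  have hrad : Ideal.span (s : Set R) ≤ A.radical := by
    rw [Ideal.span_le]
    intro a ha
    exact ⟨n a, (hmemA _).mpr (hpow a ha)⟩
  have hex : ∃ k : ℕ, Ideal.span (s : Set R) ^ k ≤ A :=
    Ideal.exists_pow_le_of_le_radical_of_fg hrad ⟨s, rfl⟩
  -- take the minimal such k
  have hfind := Nat.find_spec hex
  rcases Nat.eq_zero_or_pos (Nat.find hex) with h0 | hpos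
  · exfalso
    rw [h0, pow_zero, Ideal.one_eq_top] at hfind
    have : (1 : R) ∈ A := hfind Submodule.mem_top
    rw [hmemA, one_mul] at this
    exact hx0 this
  obtain ⟨k, hk⟩ := Nat.exists_eq_add_of_lt hpos
  rw [zero_add] at hk
  have hmin : ¬ Ideal.span (s : Set R) ^ k ≤ A := Nat.find_min hex (by omega)
  obtain ⟨r₀, hr₀mem, hr₀⟩ := SetLike.not_le_iff_exists.mp hmin
  refine ⟨r₀ * x, ?_, ?_⟩
  · intro h
    exact hr₀ ((hmemA r₀).mpr h)
  · intro a ha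
    have hmul : a * r₀ ∈ Ideal.span (s : Set R) ^ (k + 1) := by
      rw [pow_succ, show a * r₀ = r₀ * a from mul_comm a r₀]
      exact Ideal.mul_mem_mul hr₀mem ha
    have : a * r₀ ∈ A := by rw [← hk] at hmul; exact hfind hmul
    rw [hmemA] at this
    calc a * (r₀ * x) = (a * r₀) * x := by ring
      _ = 0 := this
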